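/- Assume the positive reals λ₁,…,λ_d are rationally independent, i.e., whenever r₁,…,r_d are rational numbers with r₁λ₁ + ⋯ + r_dλ_d = 0, then all r_p = 0. Then for each fixed q ∈ {1,…,N} and any two interior multi-indices 𝐣, 𝐣′ ∈ {0,…,J−2}^d one has a_q^𝐣 − a_q^{𝐣′} = h · Σ_{p=1}^d λ_p (j_p − j′_p); in particular the map 𝐣 ↦ a_q^𝐣 is injective on {0,…,J−2}^d. -/
import Mathlib


noncomputable section

/-- The smeared-out Heaviside shape function `S(z) = z - sin(2πz)/(2π)`. -/
def Sfun (z : ℝ) : ℝ := z - Real.sin (2 * Real.pi * z) / (2 * Real.pi)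

/-- The quintic shape function `P(z) = z³(6z² - 15z + 10)`. -/
def Pfun (z : ℝ) : ℝ := z ^ 3 * (6 * z ^ 2 - 15 * z + 10)

/-- The inner function `ψ_q(x) = φ(x + (1-q)δ) - φ((1-q)δ)`. -/
def psi (φ : ℝ → ℝ) (δ : ℝ) (q : ℕ) (x : ℝ) : ℝ :=
  φ (x + (1 - (q : ℝ)) * δ) - φ ((1 - (q : ℝ)) * δ)

/-- The hypercube center coordinate `c_q^j`, with the boundary conventions
`c_q^{-1} = 0` and `c_q^{J-1} = 1`. -/
def center (h δ : ℝ) (J : ℕ) (q : ℕ) (j : ℤ) : ℝ :=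
  if j = -1 then 0
  else if j = (J : ℤ) - 1 then 1
  else (j : ℝ) * h + (h + δ) / 2 + ((q : ℝ) - 1) * δ

/-- The mapped hypercube center `a_q^jv = Ψ_q(𝐜_q^jv) = Σ_p λ_p ψ_q(c_q^{j_p})`. -/
def amap (φ : ℝ → ℝ) (h δ : ℝ) (J : ℕ) {d : ℕ} (lam : Fin d → ℝ)
    (q : ℕ) (jv : Fin d → ℤ) : ℝ :=
  ∑ p, lam p * psi φ δ q (center h δ J q (jv p))

/-- difference formula and injectivity for interior multi-indices. -/
theorem amap_interior_difference
    (N : ℕ) (hN : 2 ≤ N) (δ : ℝ) (hδ : 0 < δ) (μ : ℝ) (hμ : 0 < μ)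
    (h : ℝ) (hh : h = (N : ℝ) * δ)
    (φ : ℝ → ℝ)
    (hφS : ∀ j : ℤ, ∀ t ∈ Set.Icc ((j : ℝ) * h) ((j : ℝ) * h + δ),
      φ t = (j : ℝ) * h + δ ^ μ * Sfun ((t - (j : ℝ) * h) / δ))
    (hφP : ∀ j : ℤ, ∀ t ∈ Set.Icc ((j : ℝ) * h + δ) (((j : ℝ) + 1) * h),
      φ t = (j : ℝ) * h + δ ^ μ + (h - δ ^ μ) * Pfun ((t - (j : ℝ) * h - δ) / (h - δ)))
    (J : ℕ) (hJ : 0 < J) (hJh : (J : ℝ) * h = 1)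
    (d : ℕ) (hd : 2 ≤ d) (lam : Fin d → ℝ) (hlam : ∀ p, 0 < lam p)
    (hind : ∀ r : Fin d → ℚ, (∑ p, (r p : ℝ) * lam p) = 0 → ∀ p, r p = 0)
    :
    ∀ q : ℕ, 1 ≤ q → q ≤ N →
      ∀ jv jv' : Fin d → ℤ,
        (∀ p, 0 ≤ jv p ∧ jv p ≤ (J : ℤ) - 2) →
        (∀ p, 0 ≤ jv' p ∧ jv' p ≤ (J : ℤ) - 2) →
        amap φ h δ J lam q jv - amap φ h δ J lam q jv' =
          h * ∑ p, lam p * ((jv p : ℝ) - (jv' p : ℝ)) ∧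
        (amap φ h δ J lam q jv = amap φ h δ J lam q jv' → jv = jv') := by
  intro q hq1 hq2 jv jv' hjv hjv'
  have hN2 : (2:ℝ) ≤ (N:ℝ) := by exact_mod_cast hN
  have hh0 : 0 < h := by rw [hh]; nlinarith
  have h2δ : 2 * δ ≤ h := by rw [hh]; nlinarith
  have key : ∀ j : ℤ, 0 ≤ j → j ≤ (J:ℤ) - 2 →
      psi φ δ q (center h δ J q j)
        = (j:ℝ) * h + (δ ^ μ + (h - δ ^ μ) * Pfun (((h+δ)/2 - δ)/(h-δ))
            - φ ((1 - (q:ℝ)) * δ)) := by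
    intro j hj0 hj1
    have hc : center h δ J q j = (j:ℝ)*h + (h+δ)/2 + ((q:ℝ)-1)*δ := by
      unfold center
      rw [if_neg (by omega), if_neg (by omega)]
    have harg : center h δ J q j + (1 - (q:ℝ))*δ = (j:ℝ)*h + (h+δ)/2 := by
      rw [hc]; ring
    have hmem : (j:ℝ)*h + (h+δ)/2 ∈ Set.Icc ((j:ℝ)*h + δ) (((j:ℝ)+1)*h) := by
      constructor
      · linarith
      · nlinarith
    have hv := hφP j _ hmem
    have harg2 : ((j:ℝ)*h + (h+δ)/2 - (j:ℝ)*h - δ) = (h+δ)/2 - δ := by ring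
    rw [harg2] at hv
    unfold psi
    rw [harg, hv]
    ring
  have hdiff : amap φ h δ J lam q jv - amap φ h δ J lam q jv' =
      h * ∑ p, lam p * ((jv p : ℝ) - (jv' p : ℝ)) := by
    unfold amap
    rw [← Finset.sum_sub_distrib, Finset.mul_sum]
    apply Finset.sum_congr rfl
    intro p _
    rw [key _ (hjv p).1 (hjv p).2, key _ (hjv' p).1 (hjv' p).2]
    ring
  refine ⟨hdiff, fun heq => ?_⟩
  have hsum : (∑ p, lam p * ((jv p : ℝ) - (jv' p : ℝ))) = 0 := by
    have : h * ∑ p, lam p * ((jv p : ℝ) - (jv' p : ℝ)) = 0 := by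
      rw [← hdiff, heq]; ring
    exact (mul_eq_zero.mp this).resolve_left (ne_of_gt hh0)
  have hr : ∀ p : Fin d, ((jv p - jv' p : ℤ) : ℚ) = 0 := by
    apply hind
    rw [← hsum]
    apply Finset.sum_congr rfl
    intro p _
    push_cast
    ring
  funext p
  have := hr p
  have : jv p - jv' p = 0 := by exact_mod_cast this
  omega
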